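/- Let N ∈ ℕ, (μⱼ, qⱼ) ∈ ℝ⁺ × ℝᴹ for j = 1,…,N with ∑ μⱼ = 1, and let Λ ⊂ ℝᴹ be a cone such that q_{j₁} − q_{j₂} ∈ Λ for all j₁, j₂. Then there exist (τᵢ, pᵢ) ∈ ℝ⁺ × ℝᴹ for i = 1,…,2^{N−1} such that: (a) the family {(τᵢ, pᵢ)} satisfies the H_{2^{N−1}}-condition; (b) each pᵢ equals some qⱼ; and (c) the two families have the same barycenter, ∑_{i=1}^{2^{N−1}} τᵢ pᵢ = ∑_{j=1}^{N} μⱼ qⱼ. -/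

import Mathlib

/-- A set `Λ ⊆ ℝᴹ` is a cone if it is nonempty and closed under multiplication
by arbitrary real scalars. -/
def IsCone {M : ℕ} (Λ : Set (Fin M → ℝ)) : Prop :=
  Λ.Nonempty ∧ ∀ p ∈ Λ, ∀ α : ℝ, α • p ∈ Λ

/-- The `H_N`-condition on a family of pairs `(τᵢ, pᵢ)`, defined recursively:
a single pair satisfies it iff its weight is `1`; a family of `N ≥ 2` pairs
satisfies it iff (after relabeling, i.e. permuting) the difference of the first
two points lies in `Λ` and the family obtained by merging the first two pairs
into their weighted combination satisfies the `H_{N-1}`-condition. -/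
inductive HNCond {M : ℕ} (Λ : Set (Fin M → ℝ)) : List (ℝ × (Fin M → ℝ)) → Prop
  | single (p : Fin M → ℝ) : HNCond Λ [(1, p)]
  | perm {l l' : List (ℝ × (Fin M → ℝ))} (hp : l.Perm l') (h : HNCond Λ l') :
      HNCond Λ l
  | step (τ₁ τ₂ : ℝ) (p₁ p₂ : Fin M → ℝ) (rest : List (ℝ × (Fin M → ℝ)))
      (hΛ : p₂ - p₁ ∈ Λ)
      (h : HNCond Λ
        ((τ₁ + τ₂, (τ₁ / (τ₁ + τ₂)) • p₁ + (τ₂ / (τ₁ + τ₂)) • p₂) :: rest)) :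
      HNCond Λ ((τ₁, p₁) :: (τ₂, p₂) :: rest)

namespace Stmt13Aux

variable {M : ℕ} {Λ : Set (Fin M → ℝ)}

/-- pushing an affine map `x ↦ c • x + v` through an `HNCond` family. -/
lemma hncond_affine (hΛ : IsCone Λ) (c : ℝ) (v : Fin M → ℝ) :
    ∀ {l : List (ℝ × (Fin M → ℝ))}, HNCond Λ l → (∀ x ∈ l, 0 < x.1) →
      HNCond Λ (l.map fun x => (x.1, c • x.2 + v)) := by
  intro l h
  induction h with
  | single p =>
      intro _
      simpa using HNCond.single (c • p + v)
  | perm hp h ih =>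
      intro pos
      exact HNCond.perm (hp.map _) (ih fun x hx => pos x (hp.symm.mem_iff.mp hx))
  | step τ₁ τ₂ p₁ p₂ rest hmem h ih =>
      intro pos
      have hτ₁ : 0 < τ₁ := pos (τ₁, p₁) (by simp)
      have hτ₂ : 0 < τ₂ := pos (τ₂, p₂) (by simp)
      have hs : 0 < τ₁ + τ₂ := by linarith
      have posrest : ∀ x ∈ (τ₁ + τ₂,
          (τ₁ / (τ₁ + τ₂)) • p₁ + (τ₂ / (τ₁ + τ₂)) • p₂) :: rest, 0 < x.1 := by
        intro x hx
        rcases List.mem_cons.mp hx with h' | h'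
        · rw [h']; exact hs
        · exact pos x (by simp [h'])
      have key := ih posrest
      simp only [List.map_cons] at key ⊢
      have heq : (τ₁ / (τ₁ + τ₂)) • (c • p₁ + v) + (τ₂ / (τ₁ + τ₂)) • (c • p₂ + v)
          = c • ((τ₁ / (τ₁ + τ₂)) • p₁ + (τ₂ / (τ₁ + τ₂)) • p₂) + v := by
        funext i
        simp only [Pi.add_apply, Pi.smul_apply, smul_eq_mul]
        field_simp
        ring
      refine HNCond.step _ _ _ _ _ ?_ ?_
      · have : (c • p₂ + v) - (c • p₁ + v) = c • (p₂ - p₁) := by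
          funext i; simp [Pi.sub_apply]; ring
        rw [this]
        exact hΛ.2 _ hmem c
      · rw [heq]; exact key

/-- splitting each pair `(τ, p)` into `((1-μ)τ, p)` and `(μτ, qN)`. -/
lemma hncond_split (μ : ℝ) (qN : Fin M → ℝ) :
    ∀ (l pre : List (ℝ × (Fin M → ℝ))),
      (∀ x ∈ l, 0 < x.1) → (∀ x ∈ l, qN - x.2 ∈ Λ) →
      HNCond Λ (pre ++ l.map fun x => (x.1, (1 - μ) • x.2 + μ • qN)) →
      HNCond Λ (pre ++ l.flatMap fun x => [((1 - μ) * x.1, x.2), (μ * x.1, qN)]) := by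
  intro l
  induction l with
  | nil => intro pre _ _ h; simpa using (by simpa using h)
  | cons x t ih =>
      intro pre pos hmem h
      have hx1 : 0 < x.1 := pos _ (by simp)
      have hbind : (x :: t).flatMap (fun x => [((1 - μ) * x.1, x.2), (μ * x.1, qN)])
          = ((1 - μ) * x.1, x.2) :: (μ * x.1, qN)
            :: t.flatMap fun x => [((1 - μ) * x.1, x.2), (μ * x.1, qN)] := by
        simp [List.flatMap]
      rw [hbind]
      have hperm : (pre ++ ((1 - μ) * x.1, x.2) :: (μ * x.1, qN)
            :: t.flatMap fun x => [((1 - μ) * x.1, x.2), (μ * x.1, qN)]).Perm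
          (((1 - μ) * x.1, x.2) :: (μ * x.1, qN)
            :: (pre ++ t.flatMap fun x => [((1 - μ) * x.1, x.2), (μ * x.1, qN)])) := by
        refine List.perm_middle.trans (List.Perm.cons _ List.perm_middle)
      refine HNCond.perm hperm ?_
      refine HNCond.step _ _ _ _ _ (hmem _ (by simp)) ?_
      have hsum : (1 - μ) * x.1 + μ * x.1 = x.1 := by ring
      rw [hsum]
      have hx0 : x.1 ≠ 0 := ne_of_gt hx1
      have h1 : (1 - μ) * x.1 / x.1 = 1 - μ := by field_simp
      have h2 : μ * x.1 / x.1 = μ := by field_simp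
      rw [h1, h2]
      have hperm2 : ((x.1, (1 - μ) • x.2 + μ • qN)
            :: (pre ++ t.flatMap fun x => [((1 - μ) * x.1, x.2), (μ * x.1, qN)])).Perm
          ((pre ++ [(x.1, (1 - μ) • x.2 + μ • qN)])
            ++ t.flatMap fun x => [((1 - μ) * x.1, x.2), (μ * x.1, qN)]) := by
        simpa using List.perm_middle.symm
      refine HNCond.perm hperm2 ?_
      refine ih (pre ++ [(x.1, (1 - μ) • x.2 + μ • qN)])
        (fun y hy => pos y (by simp [hy])) (fun y hy => hmem y (by simp [hy])) ?_
      have : (pre ++ [(x.1, (1 - μ) • x.2 + μ • qN)])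
            ++ t.map (fun x => (x.1, (1 - μ) • x.2 + μ • qN))
          = pre ++ (x :: t).map fun x => (x.1, (1 - μ) • x.2 + μ • qN) := by
        simp
      rw [this]; exact h

lemma bind_length (g : ℝ × (Fin M → ℝ) → List (ℝ × (Fin M → ℝ)))
    (hg : ∀ a, (g a).length = 2) :
    ∀ l : List (ℝ × (Fin M → ℝ)), (l.flatMap g).length = 2 * l.length := by
  intro l
  induction l with
  | nil => simp
  | cons x t ih => simp [List.flatMap_cons, hg, ih]; ring

lemma bind_fst_sum (a b : ℝ) (qN : Fin M → ℝ) :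
    ∀ l : List (ℝ × (Fin M → ℝ)),
      ((l.flatMap fun x => [(a * x.1, x.2), (b * x.1, qN)]).map Prod.fst).sum
        = (a + b) * (l.map Prod.fst).sum := by
  intro l
  induction l with
  | nil => simp
  | cons x t ih => simp [List.flatMap_cons, ih]; ring

lemma bind_smul_sum (a b : ℝ) (qN : Fin M → ℝ) :
    ∀ l : List (ℝ × (Fin M → ℝ)),
      ((l.flatMap fun x => [(a * x.1, x.2), (b * x.1, qN)]).map fun x => x.1 • x.2).sum
        = a • (l.map fun x => x.1 • x.2).sum + (b * (l.map Prod.fst).sum) • qN := by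
  intro l
  induction l with
  | nil => simp
  | cons x t ih =>
      simp only [List.flatMap_cons, List.map_append, List.sum_append, List.map_cons,
        List.sum_cons, List.map_nil, List.sum_nil, ih]
      module

lemma aux (hΛ : IsCone Λ) : ∀ (N : ℕ) (μ : Fin N → ℝ), (∀ j, 0 < μ j) →
    (∑ j, μ j = 1) → ∀ (q : Fin N → (Fin M → ℝ)), (∀ j₁ j₂, q j₁ - q j₂ ∈ Λ) →
    ∃ L : List (ℝ × (Fin M → ℝ)), L.length = 2 ^ (N - 1) ∧
      (∀ x ∈ L, 0 < x.1) ∧ HNCond Λ L ∧ (∀ x ∈ L, ∃ j, x.2 = q j) ∧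
      (L.map Prod.fst).sum = 1 ∧
      (L.map fun x => x.1 • x.2).sum = ∑ j, μ j • q j := by
  intro N
  induction N with
  | zero => intro μ _ hsum; simp at hsum
  | succ n ih =>
      match n, ih with
      | 0, _ =>
          intro μ hμ hsum q hq
          refine ⟨[(1, q 0)], by simp, by simp, HNCond.single _, by simp, by simp, ?_⟩
          have : μ 0 = 1 := by simpa using hsum
          simp [this]
      | (m + 1), ih =>
          intro μ hμ hsum q hq
          set μN : ℝ := μ (Fin.last (m + 1)) with hμN
          set qN : Fin M → ℝ := q (Fin.last (m + 1)) with hqN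
          have hsplit : (∑ j : Fin (m + 1), μ j.castSucc) + μN = 1 := by
            rw [← Fin.sum_univ_castSucc]; exact hsum
          have hspos : 0 < ∑ j : Fin (m + 1), μ j.castSucc :=
            Finset.sum_pos (fun j _ => hμ _) Finset.univ_nonempty
          set s : ℝ := 1 - μN with hs
          have hseq : s = ∑ j : Fin (m + 1), μ j.castSucc := by rw [hs]; linarith
          have hspos' : 0 < s := by rw [hseq]; exact hspos
          obtain ⟨L', hlen, hpos, hH, hpts, hfst, hbar⟩ :=
            ih (fun j => μ j.castSucc / s) (fun j => div_pos (hμ _) hspos')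
              (by rw [← Finset.sum_div, ← hseq, div_self (ne_of_gt hspos')])
              (fun j => q j.castSucc) (fun j₁ j₂ => hq _ _)
          refine ⟨L'.flatMap fun x => [(s * x.1, x.2), (μN * x.1, qN)], ?_, ?_, ?_, ?_, ?_, ?_⟩
          · rw [bind_length (fun x => [(s * x.1, x.2), (μN * x.1, qN)]) (fun a => rfl), hlen]
            have : m + 1 + 1 - 1 = (m + 1 - 1) + 1 := by omega
            rw [this, pow_succ]
            ring
          · intro x hx
            rcases List.mem_flatMap.mp hx with ⟨a, ha, hxa⟩
            simp only [List.mem_cons, List.mem_singleton, List.not_mem_nil, or_false] at hxa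
            rcases hxa with h' | h'
            · rw [h']; exact mul_pos hspos' (hpos a ha)
            · rw [h']; exact mul_pos (hμ _) (hpos a ha)
          · have key : HNCond Λ ([] ++ L'.flatMap fun x => [((1 - μN) * x.1, x.2), (μN * x.1, qN)]) := by
              refine hncond_split μN qN L' [] hpos ?_ ?_
              · intro x hx
                obtain ⟨j, hj⟩ := hpts x hx
                rw [hj]; exact hq _ _
              · have := hncond_affine hΛ (1 - μN) (μN • qN) hH hpos
                simpa using this
            simp only [List.nil_append] at key
            have : s = 1 - μN := hs
            rw [this]
            exact key
          · intro x hx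
            rcases List.mem_flatMap.mp hx with ⟨a, ha, hxa⟩
            simp only [List.mem_cons, List.mem_singleton, List.not_mem_nil, or_false] at hxa
            rcases hxa with h' | h'
            · obtain ⟨j, hj⟩ := hpts a ha
              exact ⟨j.castSucc, by rw [h']; exact hj⟩
            · exact ⟨Fin.last _, by rw [h']⟩
          · rw [bind_fst_sum, hfst]; linarith
          · rw [bind_smul_sum, hbar, hfst]
            rw [Fin.sum_univ_castSucc (f := fun j => μ j • q j)]
            have : s • ∑ j : Fin (m + 1), (μ j.castSucc / s) • q j.castSucc
                = ∑ j : Fin (m + 1), μ j.castSucc • q j.castSucc := by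
              rw [Finset.smul_sum]
              refine Finset.sum_congr rfl fun j _ => ?_
              rw [smul_smul, mul_div_cancel₀ _ (ne_of_gt hspos')]
            rw [this, mul_one]

end Stmt13Aux

/-- Given a convex combination `∑ μⱼ qⱼ` whose points have pairwise differences
in the cone `Λ`, there is a family of `2^(N-1)` pairs, with points among the
`qⱼ`, satisfying the `H_{2^(N-1)}`-condition and having the same barycenter. -/
theorem stmt13 (M N : ℕ) (Λ : Set (Fin M → ℝ)) (hΛ : IsCone Λ)
    (μ : Fin N → ℝ) (hμ : ∀ j, 0 < μ j) (hsum : ∑ j, μ j = 1)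
    (q : Fin N → (Fin M → ℝ)) (hq : ∀ j₁ j₂, q j₁ - q j₂ ∈ Λ) :
    ∃ (τ : Fin (2 ^ (N - 1)) → ℝ) (p : Fin (2 ^ (N - 1)) → (Fin M → ℝ)),
      (∀ i, 0 < τ i) ∧
      HNCond Λ (List.ofFn fun i => (τ i, p i)) ∧
      (∀ i, ∃ j, p i = q j) ∧
      ∑ i, τ i • p i = ∑ j, μ j • q j := by
  obtain ⟨L, hlen, hpos, hH, hpts, _, hbar⟩ := Stmt13Aux.aux hΛ N μ hμ hsum q hq
  set τ : Fin (2 ^ (N - 1)) → ℝ := fun i => (L.get (Fin.cast hlen.symm i)).1 with hτ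
  set p : Fin (2 ^ (N - 1)) → (Fin M → ℝ) := fun i => (L.get (Fin.cast hlen.symm i)).2 with hp
  have hofn : (List.ofFn fun i => (τ i, p i)) = L := by
    apply List.ext_getElem
    · simp [hlen]
    · intro i h1 h2
      simp [hτ, hp, List.getElem_ofFn, List.get_eq_getElem, Fin.cast]
  refine ⟨τ, p, ?_, ?_, ?_, ?_⟩
  · intro i
    refine hpos _ ?_
    rw [List.get_eq_getElem]
    exact L.getElem_mem _
  · rw [hofn]; exact hH
  · intro i
    refine hpts _ ?_
    rw [List.get_eq_getElem]
    exact L.getElem_mem _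
  · have h1 : ∑ i, τ i • p i = (List.ofFn fun i => τ i • p i).sum := (List.sum_ofFn).symm
    have h2 : (List.ofFn fun i => τ i • p i)
        = (List.ofFn fun i => (τ i, p i)).map fun x => x.1 • x.2 := by
      rw [List.map_ofFn]; rfl
    rw [h1, h2, hofn, hbar]
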